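/- arXiv:1710.02995 — 2 statements merged into one kernel-verified Lean document; each statement's English description precedes it below -/
import Mathlib

section
/- The series Σ_{n=0}^∞ cₙ converges and Σ_{n=0}^∞ cₙ = π²/4; explicitly, 2^{3/2}π/3 − Σ_{n=1}^∞ (π/(√2·2ⁿ·n·(n+3/2)))·∏_{k=1}^{n−1}(1 − 1/(2k)) = π²/4. -/
open Real

/-- `c₀ = 2^{3/2}π/3` and, for `n ≥ 1`,
`cₙ = −(π/(√2·2ⁿ·n·(n+3/2)))·∏_{k=1}^{n−1}(1 − 1/(2k))`. -/
noncomputable def cn (n : ℕ) : ℝ :=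
  if n = 0 then 2 ^ ((3 : ℝ) / 2) * Real.pi / 3
  else -(Real.pi / (Real.sqrt 2 * 2 ^ n * n * (n + 3 / 2))) *
    ∏ k ∈ Finset.Icc 1 (n - 1), (1 - 1 / (2 * (k : ℝ)))


open Real MeasureTheory Set



noncomputable def cb (m : ℕ) : ℝ := (Nat.centralBinom m : ℝ)

lemma cb_nonneg (m : ℕ) : 0 ≤ cb m := Nat.cast_nonneg _

lemma cb_pos (m : ℕ) : 0 < cb m := by
  unfold cb; exact_mod_cast Nat.centralBinom_pos m

lemma cb_le (m : ℕ) : cb m ≤ 4 ^ m := by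
  have h1 : Nat.centralBinom m ≤ (2 * m + 1).choose m :=
    Nat.choose_le_choose m (by omega)
  have h2 := Nat.choose_middle_le_pow m
  have : Nat.centralBinom m ≤ 4 ^ m := le_trans h1 h2
  unfold cb; exact_mod_cast this

lemma cb_rec (m : ℕ) : (m + 1 : ℝ) * cb (m+1) = 2 * (2 * m + 1) * cb m := by
  have := Nat.succ_mul_centralBinom_succ m
  have h : ((m + 1) * Nat.centralBinom (m+1) : ℕ) = (2 * (2 * m + 1) * Nat.centralBinom m : ℕ) := this
  unfold cb
  exact_mod_cast h

lemma prod_eq (m : ℕ) :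
    ∏ k ∈ Finset.Icc 1 m, (1 - 1 / (2 * (k : ℝ))) = cb m / 4 ^ m := by
  induction m with
  | zero => simp [cb, Nat.centralBinom]
  | succ n ih =>
    rw [Finset.prod_Icc_succ_top (by omega : 1 ≤ n + 1), ih]
    have hrec := cb_rec n
    have hn1 : (n : ℝ) + 1 ≠ 0 := by positivity
    have h4 : (4 : ℝ) ^ n ≠ 0 := by positivity
    field_simp
    push_cast
    linear_combination (-2 * (4:ℝ) ^ n) * hrec

lemma cb_zero : cb 0 = 1 := by
  unfold cb
  rw [Nat.centralBinom_zero]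
  norm_num



noncomputable def Gf (u : ℝ) : ℝ := ∑' m, cb m * u ^ m
noncomputable def Df (u : ℝ) : ℝ := ∑' m, cb m * (m * u ^ (m-1))

lemma usummable : Summable (fun m : ℕ => 6 * m * (2/3 : ℝ) ^ m) := by
  have h := summable_pow_mul_geometric_of_norm_lt_one (R := ℝ) 1
    (r := (2/3 : ℝ)) (by rw [Real.norm_eq_abs, abs_of_pos] <;> norm_num)
  exact (h.mul_left 6).congr (fun n => by ring)

lemma dbound : ∀ (m : ℕ) (y : ℝ), y ∈ Ioo (-(1/6) : ℝ) (1/6) →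
    ‖cb m * (m * y ^ (m-1))‖ ≤ 6 * m * (2/3 : ℝ) ^ m := by
  intro m y hy
  have hy6 : |y| ≤ 1/6 := by
    rw [abs_le]; exact ⟨le_of_lt hy.1, le_of_lt hy.2⟩
  cases m with
  | zero => simp
  | succ k =>
    rw [norm_mul, norm_mul, norm_pow, Real.norm_eq_abs (cb (k+1)),
      abs_of_nonneg (cb_nonneg _)]
    have h1 : ‖((k:ℝ)+1)‖ = (k:ℝ)+1 := by
      rw [Real.norm_eq_abs, abs_of_nonneg (by positivity)]
    have h2 : ‖y‖ ^ (k+1-1) ≤ (1/6 : ℝ) ^ k := by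
      simpa using pow_le_pow_left₀ (abs_nonneg y) hy6 k
    have h3 : cb (k+1) * (‖((k+1 : ℕ) : ℝ)‖ * ‖y‖ ^ (k+1-1)) ≤
        4 ^ (k+1) * (((k:ℝ)+1) * (1/6)^k) := by
      push_cast
      rw [h1]
      apply mul_le_mul (cb_le _) _ (by positivity) (by positivity)
      exact mul_le_mul_of_nonneg_left h2 (by positivity)
    refine h3.trans (le_of_eq ?_)
    rw [show (2/3 : ℝ) = 4 * (1/6) by norm_num, mul_pow]
    push_cast
    ring

lemma zero_mem : (0 : ℝ) ∈ Ioo (-(1/6) : ℝ) (1/6) := by constructor <;> norm_num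

lemma sum0 : Summable (fun m => cb m * (0:ℝ) ^ m) := by
  apply summable_of_ne_finset_zero (s := {0})
  intro m hm
  simp only [Finset.mem_singleton] at hm
  simp [zero_pow hm]

lemma gderiv : ∀ (m : ℕ) (y : ℝ), y ∈ Ioo (-(1/6) : ℝ) (1/6) →
    HasDerivAt (fun z => cb m * z ^ m) (cb m * (m * y ^ (m-1))) y :=
  fun m y _ => (hasDerivAt_pow m y).const_mul (cb m)

set_option maxHeartbeats 1000000 in
lemma Gf_hasDerivAt {y : ℝ} (hy : y ∈ Ioo (-(1/6) : ℝ) (1/6)) :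
    HasDerivAt Gf (Df y) y := by
  unfold Gf Df
  exact hasDerivAt_tsum_of_isPreconnected (𝕜 := ℝ)
    (g := fun m z => cb m * z ^ m) (g' := fun m y => cb m * (m * y ^ (m-1)))
    (u := fun m : ℕ => 6 * m * (2/3 : ℝ) ^ m) (y₀ := 0)
    usummable isOpen_Ioo isPreconnected_Ioo gderiv dbound zero_mem sum0 hy

lemma Df_summable {y : ℝ} (hy : y ∈ Ioo (-(1/6) : ℝ) (1/6)) :
    Summable (fun m => cb m * (m * y ^ (m-1))) :=
  Summable.of_norm_bounded usummable (fun m => dbound m y hy)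

lemma Gf_summable {y : ℝ} (hy : |y| ≤ 1/6) :
    Summable (fun m => cb m * y ^ m) := by
  apply Summable.of_norm_bounded (g := fun m => (2/3 : ℝ)^m) ?_ ?_
  rotate_left
  · intro m
    rw [norm_mul, norm_pow, Real.norm_eq_abs (cb m), abs_of_nonneg (cb_nonneg m)]
    calc cb m * |y| ^ m ≤ 4^m * (1/6 : ℝ)^m := by
          apply mul_le_mul (cb_le m) (pow_le_pow_left₀ (abs_nonneg y) hy m)
            (by positivity) (by positivity)
      _ = (2/3 : ℝ)^m := by rw [← mul_pow]; norm_num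
  · exact summable_geometric_of_lt_one (by norm_num) (by norm_num)

lemma abs_le_of_Ioo {y : ℝ} (hy : y ∈ Ioo (-(1/6) : ℝ) (1/6)) : |y| ≤ 1/6 := by
  rw [abs_le]; exact ⟨le_of_lt hy.1, le_of_lt hy.2⟩

lemma funeq {y : ℝ} (hy : y ∈ Ioo (-(1/6) : ℝ) (1/6)) :
    (1 - 4*y) * Df y = 2 * Gf y := by
  have hD := Df_summable hy
  have hG := Gf_summable (abs_le_of_Ioo hy)
  have h0 : Df y = ∑' k, cb (k+1) * (((k+1 : ℕ) : ℝ) * y ^ (k+1-1)) := by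
    rw [Df, Summable.tsum_eq_zero_add hD]
    simp
  have hterm : ∀ k : ℕ, cb (k+1) * (((k+1 : ℕ) : ℝ) * y ^ (k+1-1)) =
      (4*y) * (cb k * (k * y ^ (k-1))) + 2 * (cb k * y ^ k) := by
    intro k
    cases k with
    | zero =>
      have h := cb_rec 0
      norm_num at h ⊢
      linarith
    | succ j =>
      have h := cb_rec (j+1)
      push_cast [Nat.succ_sub_one] at h ⊢
      linear_combination y^(j+1) * h
  have hkey : Df y = (4*y) * Df y + 2 * Gf y := by
    conv_lhs => rw [h0]
    rw [tsum_congr hterm,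
      Summable.tsum_add (hD.mul_left (4*y)) (hG.mul_left 2), tsum_mul_left, tsum_mul_left]
    rfl
  linarith

lemma Gf_zero : Gf 0 = 1 := by
  unfold Gf
  rw [tsum_eq_single 0 (fun m hm => by simp [zero_pow hm])]
  simp [cb_zero]

lemma Icc_sub : Icc (0:ℝ) (1/8) ⊆ Ioo (-(1/6):ℝ) (1/6) :=
  fun x hx => ⟨by linarith [hx.1], by linarith [hx.2]⟩

lemma G_sq {x : ℝ} (hx : x ∈ Icc (0:ℝ) (1/8)) : Gf x ^ 2 * (1 - 4*x) = 1 := by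
  have hH : ∀ y ∈ Ioo (-(1/6):ℝ) (1/6),
      HasDerivAt (fun z => Gf z ^ 2 * (1 - 4*z)) 0 y := by
    intro y hy
    have h1 := Gf_hasDerivAt hy
    have hlin : HasDerivAt (fun z : ℝ => 1 - 4*z) (-4) y := by
      simpa using ((hasDerivAt_id y).const_mul (4:ℝ)).const_sub 1
    have h2 := (h1.pow 2).mul hlin
    refine h2.congr_deriv (Eq.symm ?_)
    simp only [Pi.pow_apply]
    have hf := funeq hy
    push_cast
    ring_nf
    linear_combination (-2 * Gf y) * hf
  have hcont : ContinuousOn (fun z => Gf z ^ 2 * (1 - 4*z)) (Icc (0:ℝ) (1/8)) :=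
    fun y hy => ((hH y (Icc_sub hy)).continuousAt).continuousWithinAt
  have hder : ∀ y ∈ Ico (0:ℝ) (1/8),
      HasDerivWithinAt (fun z => Gf z ^ 2 * (1 - 4*z)) 0 (Ici y) y := by
    intro y hy
    exact (hH y (Icc_sub ⟨hy.1, le_of_lt hy.2⟩)).hasDerivWithinAt
  have := constant_of_has_deriv_right_zero hcont hder x hx
  simpa [Gf_zero] using this

lemma G_hasSum {x : ℝ} (hx : x ∈ Icc (0:ℝ) (1/8)) :
    HasSum (fun m => cb m * x ^ m) (1 / Real.sqrt (1 - 4*x)) := by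
  have habs : |x| ≤ 1/6 := by
    rw [abs_of_nonneg hx.1]; linarith [hx.2]
  have hs : Summable (fun m => cb m * x ^ m) := Gf_summable habs
  have hsq := G_sq hx
  have h4 : (0:ℝ) < 1 - 4*x := by linarith [hx.2]
  have hGnn : 0 ≤ Gf x :=
    tsum_nonneg (fun m => mul_nonneg (cb_nonneg m) (pow_nonneg hx.1 m))
  have h2 : (0:ℝ) ≤ 1 / Real.sqrt (1 - 4*x) := by positivity
  have h1 : Gf x ^ 2 = (1 / Real.sqrt (1 - 4*x))^2 := by
    rw [div_pow, one_pow, Real.sq_sqrt h4.le]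
    field_simp
    linear_combination hsq
  have hval : Gf x = 1 / Real.sqrt (1 - 4*x) := by
    rw [← Real.sqrt_sq hGnn, h1, Real.sqrt_sq h2]
  rw [← hval]
  exact hs.hasSum



noncomputable def fI (m : ℕ) : ℝ → ℝ :=
  fun t => cb m / 8^m * (t^m * (1 - t * Real.sqrt t))

lemma fI_cont (m : ℕ) : Continuous (fI m) := by
  unfold fI; fun_prop

lemma fI_int (m : ℕ) : IntegrableOn (fI m) (Ioc (0:ℝ) 1) :=
  (fI_cont m).integrableOn_Ioc

lemma fI_norm_bound (m : ℕ) : ∀ t ∈ Ioc (0:ℝ) 1, ‖fI m t‖ ≤ (1/2:ℝ)^m := by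
  intro t ht
  obtain ⟨ht0, ht1⟩ := ht
  have hsnn := Real.sqrt_nonneg t
  have hst : Real.sqrt t ≤ 1 := by
    rw [show (1:ℝ) = Real.sqrt 1 by simp]
    exact Real.sqrt_le_sqrt ht1
  have h2 : t * Real.sqrt t ≤ 1 := by nlinarith
  have htm : t^m ≤ 1 := pow_le_one₀ ht0.le ht1
  have htmnn : 0 ≤ t^m := pow_nonneg ht0.le m
  have h3 : |t^m * (1 - t*Real.sqrt t)| ≤ 1 := by
    rw [abs_of_nonneg (by nlinarith)]
    nlinarith
  have hcb : cb m / 8^m ≤ (1/2:ℝ)^m := by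
    rw [div_le_iff₀ (by positivity)]
    calc cb m ≤ 4^m := cb_le m
      _ = (1/2:ℝ)^m * 8^m := by rw [← mul_pow]; norm_num
  calc ‖fI m t‖ = cb m/8^m * |t^m*(1 - t*Real.sqrt t)| := by
        rw [fI, norm_mul, Real.norm_eq_abs, Real.norm_eq_abs,
          abs_of_nonneg (div_nonneg (cb_nonneg m) (by positivity))]
      _ ≤ (1/2:ℝ)^m * 1 :=
        mul_le_mul hcb h3 (abs_nonneg _) (by positivity)
      _ = (1/2:ℝ)^m := mul_one _

lemma fI_integral_norm_le (m : ℕ) :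
    ∫ t in Ioc (0:ℝ) 1, ‖fI m t‖ ≤ (1/2:ℝ)^m := by
  have hconst : IntegrableOn (fun _ : ℝ => (1/2:ℝ)^m) (Ioc (0:ℝ) 1) :=
    integrableOn_const measure_Ioc_lt_top.ne
  have h := setIntegral_mono_on ((fI_int m).norm) hconst
    measurableSet_Ioc (fI_norm_bound m)
  simpa [Real.volume_Ioc] using h

lemma sum_norm_int : Summable (fun m => ∫ t in Ioc (0:ℝ) 1, ‖fI m t‖) := by
  apply Summable.of_nonneg_of_le
    (fun m => integral_nonneg (fun t => norm_nonneg _))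
    fI_integral_norm_le
  exact summable_geometric_of_lt_one (by norm_num) (by norm_num)

lemma hasSum_int : HasSum (fun m => ∫ t in Ioc (0:ℝ) 1, fI m t)
    (∫ t in Ioc (0:ℝ) 1, (1 - t * Real.sqrt t) / Real.sqrt (1 - t/2)) := by
  have h := hasSum_integral_of_summable_integral_norm
    (μ := volume.restrict (Ioc (0:ℝ) 1)) (F := fI) fI_int sum_norm_int
  have hval : ∫ t in Ioc (0:ℝ) 1, (∑' m, fI m t)
      = ∫ t in Ioc (0:ℝ) 1, (1 - t * Real.sqrt t) / Real.sqrt (1 - t/2) := by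
    apply setIntegral_congr_fun measurableSet_Ioc
    intro t ht
    show (∑' m, fI m t) = (1 - t * Real.sqrt t) / Real.sqrt (1 - t/2)
    have hmem : t/8 ∈ Icc (0:ℝ) (1/8) :=
      ⟨by linarith [ht.1.le], by linarith [ht.2]⟩
    have hG := (G_hasSum hmem).mul_right (1 - t * Real.sqrt t)
    have hfi : ∀ m, fI m t = cb m * (t/8)^m * (1 - t * Real.sqrt t) := by
      intro m
      rw [fI, div_pow]
      ring
    rw [tsum_congr hfi, hG.tsum_eq, show 1 - 4*(t/8) = 1 - t/2 by ring]
    ring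
  rw [← hval]
  exact h

lemma rpow_integral (m : ℕ) :
    ∫ t in (0:ℝ)..1, t^(m+1) * Real.sqrt t = 1/((m:ℝ) + 5/2) := by
  have hEq : EqOn (fun t : ℝ => t^(m+1) * Real.sqrt t)
      (fun t : ℝ => t ^ ((m:ℝ) + 3/2)) (Set.uIcc (0:ℝ) 1) := by
    intro t ht
    rw [Set.uIcc_of_le zero_le_one] at ht
    rcases eq_or_lt_of_le ht.1 with h0 | h0
    · simp only [← h0]
      rw [Real.zero_rpow (by positivity)]
      simp
    · show t^(m+1) * Real.sqrt t = t ^ ((m:ℝ) + 3/2)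
      rw [show ((m:ℝ) + 3/2) = ((m+1 : ℕ) : ℝ) + 1/2 by push_cast; ring,
        Real.rpow_add h0, Real.rpow_natCast, Real.sqrt_eq_rpow]
  have hne : ((m:ℝ) + 3/2 + 1) ≠ 0 := by positivity
  rw [intervalIntegral.integral_congr hEq,
    integral_rpow (Or.inl (by linarith [Nat.cast_nonneg (α := ℝ) m] : (-1:ℝ) < (m:ℝ) + 3/2)), Real.one_rpow,
    Real.zero_rpow hne, show (m:ℝ) + 3/2 + 1 = (m:ℝ) + 5/2 by ring]
  norm_num

lemma fI_integral_eq (m : ℕ) : ∫ t in Ioc (0:ℝ) 1, fI m t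
    = cb m / 8^m * (1/((m:ℝ)+1) - 1/((m:ℝ)+5/2)) := by
  rw [← intervalIntegral.integral_of_le zero_le_one]
  unfold fI
  rw [intervalIntegral.integral_const_mul]
  congr 1
  have hsplit : (fun t : ℝ => t^m * (1 - t * Real.sqrt t)) =
      fun t : ℝ => t^m - t^(m+1) * Real.sqrt t := by
    funext t; ring
  rw [hsplit]
  have h1 : IntervalIntegrable (fun t : ℝ => t^m) volume 0 1 :=
    (continuous_pow m).intervalIntegrable 0 1
  have h2 : IntervalIntegrable (fun t : ℝ => t^(m+1) * Real.sqrt t) volume 0 1 :=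
    ((continuous_pow (m+1)).mul Real.continuous_sqrt).intervalIntegrable 0 1
  rw [intervalIntegral.integral_sub h1 h2, integral_pow, rpow_integral]
  push_cast
  norm_num

lemma hInt1 : IntervalIntegrable (fun t : ℝ => 1/Real.sqrt (1 - t/2)) volume 0 1 := by
  apply ContinuousOn.intervalIntegrable
  apply ContinuousOn.div continuousOn_const
  · exact (Real.continuous_sqrt.comp (by fun_prop)).continuousOn
  · intro x hx
    rw [Set.uIcc_of_le zero_le_one] at hx
    exact (Real.sqrt_pos.mpr (by linarith [hx.2])).ne'

lemma hInt2 : IntervalIntegrable (fun t : ℝ => t * Real.sqrt t / Real.sqrt (1 - t/2))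
    volume 0 1 := by
  apply ContinuousOn.intervalIntegrable
  apply ContinuousOn.div (by fun_prop)
  · exact (Real.continuous_sqrt.comp (by fun_prop)).continuousOn
  · intro x hx
    rw [Set.uIcc_of_le zero_le_one] at hx
    exact (Real.sqrt_pos.mpr (by linarith [hx.2])).ne'

lemma sqrt2_sq : Real.sqrt 2 * Real.sqrt 2 = 2 := Real.mul_self_sqrt (by norm_num)
lemma sqrt2_pos : (0:ℝ) < Real.sqrt 2 := Real.sqrt_pos.mpr (by norm_num)

lemma J1 : ∫ t in (0:ℝ)..1, 1/Real.sqrt (1 - t/2) = 4 - 2*Real.sqrt 2 := by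
  have hderiv : ∀ x ∈ Set.uIcc (0:ℝ) 1,
      HasDerivAt (fun t : ℝ => -4 * Real.sqrt (1 - t/2)) (1/Real.sqrt (1 - x/2)) x := by
    intro x hx
    rw [Set.uIcc_of_le zero_le_one] at hx
    have hpos : 0 < 1 - x/2 := by linarith [hx.2]
    have h0 : HasDerivAt (fun t : ℝ => 1 - t/2) (-(1/2)) x := by
      simpa using ((hasDerivAt_id x).div_const 2).const_sub 1
    have hs : HasDerivAt (fun t : ℝ => Real.sqrt (1 - t/2))
        (1/(2*Real.sqrt (1 - x/2)) * (-(1/2))) x :=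
      (Real.hasDerivAt_sqrt hpos.ne').comp x h0
    have h4 := hs.const_mul (-4)
    refine h4.congr_deriv (Eq.symm ?_)
    have hsp : (0:ℝ) < Real.sqrt (1 - x/2) := Real.sqrt_pos.mpr hpos
    field_simp
    ring
  rw [intervalIntegral.integral_eq_sub_of_hasDerivAt hderiv hInt1]
  rw [show (1:ℝ) - 1/2 = 2⁻¹ by norm_num, show (1:ℝ) - 0/2 = 1 by norm_num,
    Real.sqrt_one, Real.sqrt_inv]
  have h2 := sqrt2_pos
  have hsq := sqrt2_sq
  field_simp
  linarith

noncomputable def G2 : ℝ → ℝ :=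
  fun t => 3*Real.sqrt 2*Real.arcsin (Real.sqrt t/Real.sqrt 2)
    - Real.sqrt t*(t+3)*Real.sqrt (1 - t/2)

lemma G2_cont : Continuous G2 := by
  unfold G2
  have h := Real.continuous_arcsin
  fun_prop

lemma G2_deriv {x : ℝ} (hx : x ∈ Ioo (0:ℝ) 1) :
    HasDerivAt G2 (x*Real.sqrt x/Real.sqrt (1 - x/2)) x := by
  obtain ⟨hx0, hx1⟩ := hx
  have hs0 : 0 < Real.sqrt x := Real.sqrt_pos.mpr hx0
  have hs2 : Real.sqrt x ^ 2 = x := Real.sq_sqrt hx0.le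
  have hd0 : 0 < 1 - x/2 := by linarith
  have hdpos : 0 < Real.sqrt (1 - x/2) := Real.sqrt_pos.mpr hd0
  have hd2 : Real.sqrt (1 - x/2) ^ 2 = 1 - x/2 := Real.sq_sqrt hd0.le
  have hr2 := sqrt2_pos
  have hr22 : Real.sqrt 2 ^ 2 = 2 := Real.sq_sqrt (by norm_num)
  have hsd : HasDerivAt Real.sqrt (1/(2*Real.sqrt x)) x :=
    Real.hasDerivAt_sqrt hx0.ne'
  have hin : HasDerivAt (fun t => Real.sqrt t / Real.sqrt 2)
      (1/(2*Real.sqrt x)/Real.sqrt 2) x := hsd.div_const _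
  have hblt : Real.sqrt x / Real.sqrt 2 < 1 := by
    rw [div_lt_one hr2]
    nlinarith
  have hbgt : -1 < Real.sqrt x / Real.sqrt 2 := by
    have := div_nonneg (Real.sqrt_nonneg x) sqrt2_pos.le
    linarith
  have harc : HasDerivAt (fun t : ℝ => Real.arcsin (Real.sqrt t / Real.sqrt 2))
      (1/Real.sqrt (1 - (Real.sqrt x/Real.sqrt 2)^2) * (1/(2*Real.sqrt x)/Real.sqrt 2)) x :=
    by have := (Real.hasDerivAt_arcsin hbgt.ne' hblt.ne).comp x hin; exact this
  have heq : 1 - (Real.sqrt x/Real.sqrt 2)^2 = 1 - x/2 := by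
    rw [div_pow, hs2, hr22]
  rw [heq] at harc
  have hp2 : HasDerivAt (fun t : ℝ => t+3) 1 x := by
    simpa using (hasDerivAt_id x).add_const 3
  have hp3 : HasDerivAt (fun t : ℝ => Real.sqrt (1 - t/2))
      (1/(2*Real.sqrt (1 - x/2)) * (-(1/2))) x := by
    have h0 : HasDerivAt (fun t : ℝ => 1 - t/2) (-(1/2)) x := by
      simpa using ((hasDerivAt_id x).div_const 2).const_sub 1
    exact (Real.hasDerivAt_sqrt hd0.ne').comp x h0
  have hprod := (hsd.mul hp2).mul hp3
  have htot := (harc.const_mul (3*Real.sqrt 2)).sub hprod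
  refine htot.congr_deriv (Eq.symm ?_)
  simp only [Pi.mul_apply]
  set s := Real.sqrt x with hsdef
  set d := Real.sqrt (1 - x/2) with hddef
  set r := Real.sqrt 2 with hrdef
  field_simp
  linear_combination (x+1) * hs2 + (2*(x+3+2*s^2)) * hd2

lemma arcsin_val : Real.arcsin (Real.sqrt 1/Real.sqrt 2) = Real.pi/4 := by
  have h1 : Real.sqrt 1 / Real.sqrt 2 = Real.sqrt 2 / 2 := by
    rw [Real.sqrt_one]
    rw [eq_div_iff (by norm_num)]
    field_simp [sqrt2_pos.ne']
    rw [Real.sq_sqrt (by norm_num)]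
  rw [h1, ← Real.sin_pi_div_four]
  exact Real.arcsin_sin (by linarith [Real.pi_pos]) (by linarith [Real.pi_pos])

lemma J2 : ∫ t in (0:ℝ)..1, t*Real.sqrt t/Real.sqrt (1 - t/2)
    = 3*Real.sqrt 2*Real.pi/4 - 2*Real.sqrt 2 := by
  rw [intervalIntegral.integral_eq_sub_of_hasDeriv_right_of_le zero_le_one
    G2_cont.continuousOn (fun x hx => (G2_deriv hx).hasDerivWithinAt) hInt2]
  unfold G2
  rw [arcsin_val]
  rw [show (1:ℝ) - 1/2 = 2⁻¹ by norm_num, show (1:ℝ) - 0/2 = 1 by norm_num]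
  simp [Real.sqrt_inv, Real.sqrt_one]
  have h2 := sqrt2_pos
  have hsq := sqrt2_sq
  field_simp
  ring_nf
  nlinarith [hsq, h2, Real.pi_pos]

lemma Jval : ∫ t in Ioc (0:ℝ) 1, (1 - t*Real.sqrt t)/Real.sqrt (1 - t/2)
    = 4 - 3*Real.sqrt 2*Real.pi/4 := by
  rw [← intervalIntegral.integral_of_le zero_le_one]
  have hsplit : EqOn (fun t : ℝ => (1 - t*Real.sqrt t)/Real.sqrt (1 - t/2))
      (fun t : ℝ => 1/Real.sqrt (1 - t/2) - t*Real.sqrt t/Real.sqrt (1 - t/2))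
      (Set.uIcc (0:ℝ) 1) := fun t _ => by
    show (1 - t*Real.sqrt t)/Real.sqrt (1 - t/2) = _
    ring
  rw [intervalIntegral.integral_congr hsplit,
    intervalIntegral.integral_sub hInt1 hInt2, J1, J2]
  ring

lemma pow8 (m : ℕ) : (8:ℝ)^m = 2^m * 4^m := by rw [← mul_pow]; norm_num

lemma rpow_32 : (2:ℝ) ^ ((3:ℝ)/2) = 2 * Real.sqrt 2 := by
  rw [show (3:ℝ)/2 = 1 + 1/2 by norm_num, Real.rpow_add (by norm_num), Real.rpow_one,
    ← Real.sqrt_eq_rpow]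

lemma term_eq (m : ℕ) : -(Real.pi/(3*Real.sqrt 2)) * (∫ t in Ioc (0:ℝ) 1, fI m t)
    = cn (m+1) := by
  rw [fI_integral_eq]
  simp only [cn, if_neg (Nat.succ_ne_zero m), Nat.add_sub_cancel]
  rw [_root_.prod_eq]
  have h8 := pow8 m
  have hs2 := sqrt2_sq
  have hs0 := sqrt2_pos
  have hm1 : ((m:ℝ) + 1) ≠ 0 := by positivity
  have hm5 : ((m:ℝ) + 5/2) ≠ 0 := by positivity
  have h4m : ((4:ℝ)^m) ≠ 0 := by positivity
  have h2m : ((2:ℝ)^m) ≠ 0 := by positivity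
  push_cast
  rw [h8, pow_succ]
  field_simp
  ring_nf

lemma value_eq : -(Real.pi/(3*Real.sqrt 2)) * (4 - 3*Real.sqrt 2*Real.pi/4)
    = Real.pi^2/4 - 2 ^ ((3:ℝ)/2) * Real.pi/3 := by
  rw [rpow_32]
  have hs2 := sqrt2_sq
  have hs0 := sqrt2_pos
  field_simp
  ring_nf
  nlinarith [hs2, hs0, Real.pi_pos]


/-- The series `Σ_{n=0}^∞ cₙ` converges and its sum equals `π²/4`; explicitly,
`2^{3/2}π/3 − Σ_{n=1}^∞ (π/(√2·2ⁿ·n·(n+3/2)))·∏_{k=1}^{n−1}(1 − 1/(2k)) = π²/4`. -/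
theorem hasSum_cn : HasSum cn (Real.pi ^ 2 / 4) := by
  have h1 := (hasSum_int).mul_left (-(Real.pi/(3*Real.sqrt 2)))
  rw [Jval] at h1
  have hfe : (fun m : ℕ => -(Real.pi/(3*Real.sqrt 2)) * (∫ t in Ioc (0:ℝ) 1, fI m t))
      = (fun m : ℕ => cn (m+1)) := funext term_eq
  rw [hfe, value_eq] at h1
  have h5 := (hasSum_nat_add_iff (f := cn) 1).mp h1
  have hcn0 : cn 0 = 2 ^ ((3:ℝ)/2) * Real.pi/3 := by simp [cn]
  simp only [Finset.range_one, Finset.sum_singleton, hcn0] at h5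
  rwa [sub_add_cancel] at h5
end

section
/- There is a constant C > 0 such that for all real y ≥ 1, |Σ_{m ∈ ℕ, m ≤ y} r₂(m)·(y − m)^{1/2} − (2π/3)·y^{3/2}| ≤ C·y. -/
open Real Finset

/-- `r₂(m)`: the number of representations of `m` as a sum of two squares of integers. -/
noncomputable def r2 (m : ℕ) : ℕ :=
  Set.ncard {p : ℤ × ℤ | p.1 ^ 2 + p.2 ^ 2 = (m : ℤ)}


lemma sum_vs_integral (f : ℝ → ℝ) (m : ℕ)
    (hf : AntitoneOn f (Set.Icc (0:ℝ) (m+1)))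
    (hlast : 0 ≤ f (m+1)) :
    |(∑ i ∈ Finset.range (m+1), f i) - ∫ x in (0:ℝ)..(m+1:ℕ), f x| ≤ f 0 := by
  have hf' : AntitoneOn f (Set.Icc (0:ℝ) (0 + (m+1:ℕ))) := by
    simpa using hf
  have h1 := hf'.integral_le_sum
  have h2 := hf'.sum_le_integral
  simp only [zero_add] at h1 h2
  push_cast at h1 h2
  have e1 : (∑ i ∈ Finset.range (m+1), f i)
      = (∑ i ∈ Finset.range m, f ((i:ℝ)+1)) + f ((0:ℕ)) := by
    have := Finset.sum_range_succ' (fun i => f (i:ℕ)) m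
    push_cast at this ⊢
    exact this
  have e2 : (∑ i ∈ Finset.range (m+1), f ((i:ℝ)+1))
      = (∑ i ∈ Finset.range m, f ((i:ℝ)+1)) + f ((m:ℝ)+1) :=
    Finset.sum_range_succ (fun i => f ((i:ℝ)+1)) m
  push_cast at e1
  have hupper : (∑ i ∈ Finset.range (m+1), f i) ≤ (∫ x in (0:ℝ)..(m+1:ℕ), f x) + f 0 := by
    push_cast
    nlinarith [h2, e1, e2, hlast]
  have h0 : 0 ≤ f 0 := le_trans hlast (hf ⟨le_refl 0, by positivity⟩
    ⟨by positivity, le_refl _⟩ (by positivity))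
  push_cast at hupper ⊢
  rw [abs_le]
  refine ⟨by linarith [h1], by linarith [hupper]⟩

lemma sum_Icc_reflect (g : ℝ → ℝ) (hg : ∀ x, g (-x) = g x) (N : ℕ) :
    ∑ b ∈ Finset.Icc (-(N:ℤ)) N, g b
      = 2 * (∑ i ∈ Finset.range (N+1), g i) - g 0 := by
  have hsplit : Finset.Icc (-(N:ℤ)) N
      = Finset.Icc (-(N:ℤ)) (-1) ∪ Finset.Icc (0:ℤ) N := by
    ext x; simp only [Finset.mem_Icc, Finset.mem_union]; omega
  have hdisj : Disjoint (Finset.Icc (-(N:ℤ)) (-1)) (Finset.Icc (0:ℤ) N) := by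
    rw [Finset.disjoint_left]; intro a ha hb
    simp only [Finset.mem_Icc] at ha hb; omega
  rw [hsplit, Finset.sum_union hdisj]
  have hneg : ∑ b ∈ Finset.Icc (-(N:ℤ)) (-1), g b
      = ∑ b ∈ Finset.Icc (1:ℤ) N, g b := by
    refine Finset.sum_nbij' (fun b => -b) (fun b => -b) ?_ ?_ ?_ ?_ ?_
    · intro a ha; simp only [Finset.mem_Icc] at ha ⊢; omega
    · intro a ha; simp only [Finset.mem_Icc] at ha ⊢; omega
    · intro a _; ring
    · intro a _; ring
    · intro a _
      have : ((-a : ℤ) : ℝ) = -(a : ℝ) := by push_cast; ring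
      rw [this, hg]
  have hnat : ∀ M : ℕ, ∑ b ∈ Finset.Icc (0:ℤ) M, g b
      = ∑ i ∈ Finset.range (M+1), g i := by
    intro M
    refine Finset.sum_nbij' (fun b => b.toNat) (fun i => (i:ℤ)) ?_ ?_ ?_ ?_ ?_
    · intro a ha; simp only [Finset.mem_Icc] at ha; simp only [Finset.mem_range]; omega
    · intro a ha; simp only [Finset.mem_range] at ha; simp only [Finset.mem_Icc]; omega
    · intro a ha; simp only [Finset.mem_Icc] at ha
      show ((a.toNat : ℕ) : ℤ) = a
      exact Int.toNat_of_nonneg ha.1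
    · intro a _
      show ((a : ℤ)).toNat = a
      exact Int.toNat_natCast a
    · intro a ha; simp only [Finset.mem_Icc] at ha
      have h := Int.toNat_of_nonneg ha.1
      congr 1
      exact_mod_cast h.symm
  have hzero : ∑ b ∈ Finset.Icc (0:ℤ) N, g b
      = g 0 + ∑ b ∈ Finset.Icc (1:ℤ) N, g b := by
    have : Finset.Icc (0:ℤ) N = insert 0 (Finset.Icc (1:ℤ) N) := by
      ext x; simp only [Finset.mem_Icc, Finset.mem_insert]; omega
    rw [this, Finset.sum_insert (by simp)]
    norm_num
  have h2 : ∑ b ∈ Finset.Icc (1:ℤ) N, g b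
      = (∑ i ∈ Finset.range (N+1), g i) - g 0 := by
    have := hnat N
    rw [hzero] at this
    push_cast at this ⊢
    linarith
  rw [hneg, hzero, h2]
  push_cast
  ring


lemma cont_sqrt (s : ℝ) : Continuous (fun t : ℝ => Real.sqrt (s - t^2)) :=
  (continuous_const.sub (continuous_pow 2)).sqrt

lemma integral_sqrt_sym (s : ℝ) (hs : 0 < s) :
    ∫ t in (-(Real.sqrt s))..(Real.sqrt s), Real.sqrt (s - t^2) = π * s / 2 := by
  set c := Real.sqrt s with hc
  have hc0 : 0 < c := Real.sqrt_pos.2 hs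
  have hcs : c^2 = s := Real.sq_sqrt hs.le
  have key := intervalIntegral.smul_integral_comp_mul_left
    (a := (-1:ℝ)) (b := 1) (fun t => Real.sqrt (s - t^2)) c
  rw [mul_neg_one, mul_one] at key
  rw [← key]
  have heq : ∀ x : ℝ, Real.sqrt (s - (c*x)^2) = c * Real.sqrt (1 - x^2) := by
    intro x
    rw [show s - (c*x)^2 = c^2 * (1 - x^2) by nlinarith [hcs],
      Real.sqrt_mul (by positivity), Real.sqrt_sq hc0.le]
  simp only [heq]
  rw [intervalIntegral.integral_const_mul, integral_sqrt_one_sub_sq, smul_eq_mul, ← hcs]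
  ring

lemma integral_sqrt_trunc (s c : ℝ) (hc : Real.sqrt s ≤ c) (hc0 : 0 ≤ c) :
    ∫ t in (0:ℝ)..c, Real.sqrt (s - t^2) = π * max s 0 / 4 := by
  rcases le_or_gt s 0 with hs | hs
  · have hz : ∀ t : ℝ, Real.sqrt (s - t^2) = 0 := fun t =>
      Real.sqrt_eq_zero'.2 (by nlinarith [sq_nonneg t])
    simp only [hz, intervalIntegral.integral_zero, max_eq_right hs]
    ring
  · set r := Real.sqrt s with hr
    have hr0 : 0 < r := Real.sqrt_pos.2 hs
    have hrs : r^2 = s := Real.sq_sqrt hs.le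
    -- split at r
    have hsplit : (∫ t in (0:ℝ)..r, Real.sqrt (s - t^2))
        + (∫ t in r..c, Real.sqrt (s - t^2)) = ∫ t in (0:ℝ)..c, Real.sqrt (s - t^2) :=
      intervalIntegral.integral_add_adjacent_intervals
        ((cont_sqrt s).intervalIntegrable _ _) ((cont_sqrt s).intervalIntegrable _ _)
    have htail : (∫ t in r..c, Real.sqrt (s - t^2)) = 0 := by
      rw [← intervalIntegral.integral_zero (a := r) (b := c) (E := ℝ)]
      apply intervalIntegral.integral_congr
      intro t ht
      rw [Set.uIcc_of_le (hr ▸ hc)] at ht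
      exact Real.sqrt_eq_zero'.2 (by nlinarith [ht.1, hrs, hr0])
    -- symmetric half
    have hhalf : (∫ t in (0:ℝ)..r, Real.sqrt (s - t^2)) = π * s / 4 := by
      have hsym := integral_sqrt_sym s hs
      have hrefl : (∫ t in (-r)..(0:ℝ), Real.sqrt (s - t^2))
          = ∫ t in (0:ℝ)..r, Real.sqrt (s - t^2) := by
        have h := intervalIntegral.integral_comp_neg (a := (0:ℝ)) (b := r)
          (fun t => Real.sqrt (s - t^2))
        simp only [neg_zero, neg_sq] at h
        exact h.symm
      have hadd : (∫ t in (-r)..(0:ℝ), Real.sqrt (s - t^2))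
          + (∫ t in (0:ℝ)..r, Real.sqrt (s - t^2)) = π * s / 2 := by
        rw [intervalIntegral.integral_add_adjacent_intervals
          ((cont_sqrt s).intervalIntegrable _ _) ((cont_sqrt s).intervalIntegrable _ _)]
        exact hsym
      linarith [hrefl, hadd]
    rw [← hsplit, htail, hhalf, max_eq_left hs.le]
    ring

lemma cont_parab (y : ℝ) : Continuous (fun t : ℝ => max (y - t^2) 0) :=
  (continuous_const.sub (continuous_pow 2)).max continuous_const

lemma integral_parab_trunc (y c : ℝ) (hy : 0 ≤ y) (hc : Real.sqrt y ≤ c) :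
    ∫ t in (0:ℝ)..c, max (y - t^2) 0 = 2/3 * (y * Real.sqrt y) := by
  set r := Real.sqrt y with hr
  have hr0 : 0 ≤ r := Real.sqrt_nonneg y
  have hrs : r^2 = y := Real.sq_sqrt hy
  have hsplit : (∫ t in (0:ℝ)..r, max (y - t^2) 0)
      + (∫ t in r..c, max (y - t^2) 0) = ∫ t in (0:ℝ)..c, max (y - t^2) 0 :=
    intervalIntegral.integral_add_adjacent_intervals
      ((cont_parab y).intervalIntegrable _ _) ((cont_parab y).intervalIntegrable _ _)
  have htail : (∫ t in r..c, max (y - t^2) 0) = 0 := by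
    have hcg : (∫ t in r..c, max (y - t^2) 0) = ∫ _ in r..c, (0:ℝ) := by
      apply intervalIntegral.integral_congr
      intro t ht
      rw [Set.uIcc_of_le (hr ▸ hc), Set.mem_Icc] at ht
      obtain ⟨h1, h2⟩ := ht
      have hle : y - t^2 ≤ 0 := by
        nlinarith [mul_nonneg (sub_nonneg.2 h1) (show (0:ℝ) ≤ t + r by linarith), hrs]
      exact max_eq_right hle
    rw [hcg, intervalIntegral.integral_zero]
  have hhead : (∫ t in (0:ℝ)..r, max (y - t^2) 0) = ∫ t in (0:ℝ)..r, (y - t^2) := by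
    apply intervalIntegral.integral_congr
    intro t ht
    rw [Set.uIcc_of_le hr0, Set.mem_Icc] at ht
    obtain ⟨h1, h2⟩ := ht
    have hle : (0:ℝ) ≤ y - t^2 := by nlinarith [h1, h2, hrs]
    exact max_eq_left hle
  have hval : (∫ t in (0:ℝ)..r, (y - t^2)) = 2/3 * (y * r) := by
    rw [intervalIntegral.integral_sub intervalIntegrable_const
      ((continuous_pow 2).intervalIntegrable _ _), intervalIntegral.integral_const,
      integral_pow]
    have : r^3 = y * r := by nlinarith [hrs]
    push_cast
    rw [smul_eq_mul]
    nlinarith [this]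
  rw [← hsplit, htail, hhead, hval]
  ring

lemma inner_est (s : ℝ) (N : ℕ) (hsN : Real.sqrt s ≤ (N:ℝ) + 1) :
    |(∑ b ∈ Finset.Icc (-(N:ℤ)) N, Real.sqrt (s - (b:ℝ)^2)) - π * max s 0 / 2|
      ≤ 3 * Real.sqrt s := by
  set f : ℝ → ℝ := fun x => Real.sqrt (s - x^2) with hf
  have heven : ∀ x, f (-x) = f x := by intro x; simp [hf]
  have hanti : AntitoneOn f (Set.Icc (0:ℝ) ((N:ℝ)+1)) := by
    intro a ha b hb hab
    apply Real.sqrt_le_sqrt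
    rw [Set.mem_Icc] at ha hb
    nlinarith [ha.1, hab]
  have hcomp := sum_vs_integral f N hanti (Real.sqrt_nonneg _)
  have hint : (∫ x in (0:ℝ)..(N+1:ℕ), f x) = π * max s 0 / 4 := by
    have : ((N+1:ℕ):ℝ) = (N:ℝ)+1 := by push_cast; ring
    rw [this]
    exact integral_sqrt_trunc s ((N:ℝ)+1) hsN (by positivity)
  have hrefl := sum_Icc_reflect f heven N
  have hf0 : f 0 = Real.sqrt s := by simp [hf]
  rw [hint, hf0] at hcomp
  rw [hrefl, hf0]
  rw [abs_le] at hcomp ⊢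
  constructor <;> nlinarith [hcomp.1, hcomp.2]

lemma outer_est (y : ℝ) (hy : 1 ≤ y) (N : ℕ) (hN : Real.sqrt y ≤ (N:ℝ) + 1) :
    |(∑ a ∈ Finset.Icc (-(N:ℤ)) N, π / 2 * max (y - (a:ℝ)^2) 0)
      - 2 * π / 3 * (y * Real.sqrt y)| ≤ 3 * π / 2 * y := by
  set h : ℝ → ℝ := fun x => max (y - x^2) 0 with hh
  have heven : ∀ x, h (-x) = h x := by intro x; simp [hh]
  have hanti : AntitoneOn h (Set.Icc (0:ℝ) ((N:ℝ)+1)) := by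
    intro a ha b hb hab
    rw [Set.mem_Icc] at ha hb
    apply max_le_max _ le_rfl
    nlinarith [ha.1, hab]
  have hcomp := sum_vs_integral h N hanti (le_max_right _ _)
  have hint : (∫ x in (0:ℝ)..(N+1:ℕ), h x) = 2/3 * (y * Real.sqrt y) := by
    have : ((N+1:ℕ):ℝ) = (N:ℝ)+1 := by push_cast; ring
    rw [this]
    exact integral_parab_trunc y ((N:ℝ)+1) (by linarith) hN
  have hrefl := sum_Icc_reflect h heven N
  have hh0 : h 0 = y := by
    simp only [hh]
    rw [show y - (0:ℝ)^2 = y by ring]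
    exact max_eq_left (by linarith)
  rw [hint, hh0] at hcomp
  have hsum : ∑ a ∈ Finset.Icc (-(N:ℤ)) N, π / 2 * max (y - (a:ℝ)^2) 0
      = π / 2 * ∑ a ∈ Finset.Icc (-(N:ℤ)) N, h a := by
    rw [Finset.mul_sum]
  rw [hsum, hrefl, hh0]
  rw [abs_le] at hcomp ⊢
  have hpi := Real.pi_pos
  constructor <;> nlinarith [hcomp.1, hcomp.2]

lemma counting (y : ℝ) (hy : 1 ≤ y) :
    (∑ m ∈ Finset.range (⌊y⌋₊ + 1), (r2 m : ℝ) * Real.sqrt (y - m))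
      = ∑ p ∈ (Finset.Icc (-(⌊y⌋₊:ℤ)) ⌊y⌋₊) ×ˢ (Finset.Icc (-(⌊y⌋₊:ℤ)) ⌊y⌋₊),
          Real.sqrt (y - ((p.1^2 + p.2^2 : ℤ) : ℝ)) := by
  set N := ⌊y⌋₊ with hN
  set B := (Finset.Icc (-(N:ℤ)) N) ×ˢ (Finset.Icc (-(N:ℤ)) N) with hB
  have hylt : y < (N:ℝ) + 1 := by
    have := Nat.lt_floor_add_one y
    push_cast at this ⊢
    exact this
  have habs : ∀ a : ℤ, |a| ≤ a^2 := by
    intro a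
    rcases eq_or_ne a 0 with rfl | h
    · simp
    · have h1 : 1 ≤ |a| := Int.one_le_abs h
      nlinarith [sq_abs a]
  have hr2 : ∀ m ∈ Finset.range (N+1), (r2 m : ℝ) * Real.sqrt (y - m)
      = ∑ _p ∈ B.filter (fun p => (p.1^2 + p.2^2).toNat = m), Real.sqrt (y - m) := by
    intro m hm
    rw [Finset.sum_const, nsmul_eq_mul]
    congr 1
    norm_cast
    rw [r2]
    have hmN : (m:ℤ) ≤ (N:ℤ) := by exact_mod_cast Nat.lt_succ_iff.1 (Finset.mem_range.1 hm)
    have hset : {p : ℤ × ℤ | p.1 ^ 2 + p.2 ^ 2 = (m : ℤ)}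
        = ↑(B.filter (fun p => (p.1^2 + p.2^2).toNat = m)) := by
      ext p
      simp only [Set.mem_setOf_eq, Finset.coe_filter, hB, Finset.mem_product, Finset.mem_Icc,
        Set.mem_setOf_eq]
      constructor
      · intro h
        have h1 : p.1^2 ≤ (m:ℤ) := by nlinarith [sq_nonneg p.2]
        have h2 : p.2^2 ≤ (m:ℤ) := by nlinarith [sq_nonneg p.1]
        have ha1 : |p.1| ≤ (N:ℤ) := le_trans (le_trans (habs p.1) h1) hmN
        have ha2 : |p.2| ≤ (N:ℤ) := le_trans (le_trans (habs p.2) h2) hmN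
        rw [abs_le] at ha1 ha2
        exact ⟨⟨ha1, ha2⟩, by rw [h, Int.toNat_natCast]⟩
      · rintro ⟨_, h⟩
        have hnn : (0:ℤ) ≤ p.1^2 + p.2^2 := by positivity
        rw [← Int.toNat_of_nonneg hnn, h]
    rw [hset, Set.ncard_coe_finset]
  rw [Finset.sum_congr rfl hr2]
  have hfib := Finset.sum_fiberwise_eq_sum_filter' B (Finset.range (N+1))
    (fun p => (p.1^2 + p.2^2).toNat) (fun m => Real.sqrt (y - m))
  rw [hfib]
  rw [Finset.sum_subset (Finset.filter_subset _ _) ?_]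
  · apply Finset.sum_congr rfl
    intro p _
    have hnn : (0:ℤ) ≤ p.1^2 + p.2^2 := by positivity
    have h2 : (((p.1^2 + p.2^2).toNat : ℕ) : ℝ) = ((p.1^2 + p.2^2 : ℤ) : ℝ) := by
      exact_mod_cast congrArg (fun z : ℤ => (z:ℝ)) (Int.toNat_of_nonneg hnn)
    rw [h2]
  · intro p hpB hpf
    have hg : N + 1 ≤ (p.1^2 + p.2^2).toNat := by
      by_contra hlt
      push_neg at hlt
      exact hpf (Finset.mem_filter.2 ⟨hpB, Finset.mem_range.2 hlt⟩)
    apply Real.sqrt_eq_zero'.2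
    have hge : ((N:ℝ)+1) ≤ (((p.1^2 + p.2^2).toNat : ℕ) : ℝ) := by exact_mod_cast hg
    linarith

/-- There is `C > 0` such that for all `y ≥ 1`,
`|Σ_{m ∈ ℕ, m ≤ y} r₂(m)·(y − m)^{1/2} − (2π/3)·y^{3/2}| ≤ C·y`. -/
theorem riesz_mean_half :
    ∃ C : ℝ, 0 < C ∧ ∀ y : ℝ, 1 ≤ y →
      |(∑ m ∈ Finset.range (⌊y⌋₊ + 1), (r2 m : ℝ) * (y - m) ^ ((1 : ℝ) / 2)) -
        2 * Real.pi / 3 * y ^ ((3 : ℝ) / 2)| ≤ C * y := by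
  refine ⟨14, by norm_num, ?_⟩
  intro y hy
  have hy0 : (0:ℝ) < y := lt_of_lt_of_le zero_lt_one hy
  set N := ⌊y⌋₊ with hNdef
  have hylt : y < (N:ℝ) + 1 := by
    have := Nat.lt_floor_add_one y
    push_cast at this ⊢
    exact this
  have hsqy : Real.sqrt y ≤ y := by
    nlinarith [sq_nonneg (Real.sqrt y - 1), Real.sq_sqrt hy0.le, Real.sqrt_nonneg y]
  have hsqy0 : 0 ≤ Real.sqrt y := Real.sqrt_nonneg y
  -- rewrite rpow as sqrt
  have hrw : (∑ m ∈ Finset.range (N + 1), (r2 m : ℝ) * (y - m) ^ ((1 : ℝ) / 2))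
      = ∑ m ∈ Finset.range (N + 1), (r2 m : ℝ) * Real.sqrt (y - m) := by
    apply Finset.sum_congr rfl
    intro m _
    rw [Real.sqrt_eq_rpow]
  have hpow : y ^ ((3 : ℝ) / 2) = y * Real.sqrt y := by
    rw [show (3:ℝ)/2 = 1 + 1/2 by norm_num, Real.rpow_add hy0, Real.rpow_one,
      ← Real.sqrt_eq_rpow]
  rw [hrw, hpow, counting y hy]
  -- switch to iterated sum
  rw [Finset.sum_product]
  have hinner_eq : ∀ a ∈ Finset.Icc (-(N:ℤ)) N,
      (∑ b ∈ Finset.Icc (-(N:ℤ)) N, Real.sqrt (y - ((a^2 + b^2 : ℤ) : ℝ)))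
      = ∑ b ∈ Finset.Icc (-(N:ℤ)) N, Real.sqrt ((y - (a:ℝ)^2) - (b:ℝ)^2) := by
    intro a _
    apply Finset.sum_congr rfl
    intro b _
    congr 1
    push_cast
    ring
  rw [Finset.sum_congr rfl hinner_eq]
  -- estimates
  set T : ℤ → ℝ := fun a => ∑ b ∈ Finset.Icc (-(N:ℤ)) N, Real.sqrt ((y - (a:ℝ)^2) - (b:ℝ)^2)
    with hT
  set G : ℤ → ℝ := fun a => π / 2 * max (y - (a:ℝ)^2) 0 with hG
  have hsb : ∀ a : ℤ, Real.sqrt (y - (a:ℝ)^2) ≤ (N:ℝ) + 1 := by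
    intro a
    calc Real.sqrt (y - (a:ℝ)^2) ≤ Real.sqrt y :=
          Real.sqrt_le_sqrt (by nlinarith [sq_nonneg ((a:ℝ))])
    _ ≤ y := hsqy
    _ ≤ (N:ℝ) + 1 := hylt.le
  have hTG : ∀ a : ℤ, |T a - G a| ≤ 3 * Real.sqrt (y - (a:ℝ)^2) := by
    intro a
    have := inner_est (y - (a:ℝ)^2) N (hsb a)
    have hGa : G a = π * max (y - (a:ℝ)^2) 0 / 2 := by rw [hG]; ring
    rw [hGa]
    exact this
  -- sum of errors
  set K := ⌊Real.sqrt y⌋₊ with hK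
  have hKN : K ≤ N := Nat.floor_mono hsqy
  have hsqK : Real.sqrt y < (K:ℝ) + 1 := by
    have := Nat.lt_floor_add_one (Real.sqrt y)
    push_cast at this ⊢
    exact this
  have hKle : (K:ℝ) ≤ Real.sqrt y := Nat.floor_le hsqy0
  have herrsum : ∑ a ∈ Finset.Icc (-(N:ℤ)) N, 3 * Real.sqrt (y - (a:ℝ)^2) ≤ 9 * y := by
    have hzero : ∀ a ∈ Finset.Icc (-(N:ℤ)) N, a ∉ Finset.Icc (-(K:ℤ)) K →
        3 * Real.sqrt (y - (a:ℝ)^2) = 0 := by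
      intro a _ ha
      simp only [Finset.mem_Icc, not_and_or, not_le] at ha
      have habs : (K:ℝ) + 1 ≤ |(a:ℝ)| := by
        have hi : (K:ℤ) + 1 ≤ |a| := by
          rcases ha with h | h
          · exact le_trans (by omega) (neg_le_abs a)
          · exact le_trans (by omega) (le_abs_self a)
        exact_mod_cast hi
      have hsq : y < (a:ℝ)^2 := by
        have h1 : Real.sqrt y < |(a:ℝ)| := lt_of_lt_of_le hsqK habs
        have h2 : (Real.sqrt y)^2 < |(a:ℝ)|^2 := by nlinarith [hsqy0]
        rw [Real.sq_sqrt hy0.le, sq_abs] at h2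
        exact h2
      rw [Real.sqrt_eq_zero'.2 (by linarith)]
      ring
    have hsub : Finset.Icc (-(K:ℤ)) K ⊆ Finset.Icc (-(N:ℤ)) N := by
      apply Finset.Icc_subset_Icc <;> [exact_mod_cast neg_le_neg (by exact_mod_cast hKN); exact_mod_cast hKN]
    rw [← Finset.sum_subset hsub hzero]
    have hbound : ∀ a ∈ Finset.Icc (-(K:ℤ)) K, 3 * Real.sqrt (y - (a:ℝ)^2) ≤ 3 * Real.sqrt y := by
      intro a _
      have := Real.sqrt_le_sqrt (show y - (a:ℝ)^2 ≤ y by nlinarith [sq_nonneg ((a:ℝ))])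
      linarith
    calc ∑ a ∈ Finset.Icc (-(K:ℤ)) K, 3 * Real.sqrt (y - (a:ℝ)^2)
        ≤ ∑ _a ∈ Finset.Icc (-(K:ℤ)) K, 3 * Real.sqrt y := Finset.sum_le_sum hbound
      _ = ((Finset.Icc (-(K:ℤ)) K).card : ℝ) * (3 * Real.sqrt y) := by
          rw [Finset.sum_const, nsmul_eq_mul]
      _ ≤ (2 * (K:ℝ) + 1) * (3 * Real.sqrt y) := by
          have hcard : (Finset.Icc (-(K:ℤ)) K).card = 2 * K + 1 := by
            rw [Int.card_Icc]
            omega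
          rw [hcard]
          push_cast
          nlinarith [hsqy0]
      _ ≤ (2 * Real.sqrt y + 1) * (3 * Real.sqrt y) := by nlinarith [hsqy0, hKle]
      _ ≤ 9 * y := by nlinarith [Real.sq_sqrt hy0.le, hsqy, hy]
  -- final assembly
  have houter := outer_est y hy N (le_trans hsqy hylt.le)
  have hsum_split : ∑ a ∈ Finset.Icc (-(N:ℤ)) N, T a - ∑ a ∈ Finset.Icc (-(N:ℤ)) N, G a
      = ∑ a ∈ Finset.Icc (-(N:ℤ)) N, (T a - G a) := (Finset.sum_sub_distrib _ _).symm
  have herr : |∑ a ∈ Finset.Icc (-(N:ℤ)) N, (T a - G a)| ≤ 9 * y := by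
    calc |∑ a ∈ Finset.Icc (-(N:ℤ)) N, (T a - G a)|
        ≤ ∑ a ∈ Finset.Icc (-(N:ℤ)) N, |T a - G a| :=
          Finset.abs_sum_le_sum_abs _ _
      _ ≤ ∑ a ∈ Finset.Icc (-(N:ℤ)) N, 3 * Real.sqrt (y - (a:ℝ)^2) :=
          Finset.sum_le_sum (fun a _ => hTG a)
      _ ≤ 9 * y := herrsum
  have hGsum : |(∑ a ∈ Finset.Icc (-(N:ℤ)) N, G a) - 2 * π / 3 * (y * Real.sqrt y)|
      ≤ 3 * π / 2 * y := houter
  calc |(∑ a ∈ Finset.Icc (-(N:ℤ)) N, T a) - 2 * π / 3 * (y * Real.sqrt y)|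
      ≤ |∑ a ∈ Finset.Icc (-(N:ℤ)) N, (T a - G a)|
        + |(∑ a ∈ Finset.Icc (-(N:ℤ)) N, G a) - 2 * π / 3 * (y * Real.sqrt y)| := by
        have key : (∑ a ∈ Finset.Icc (-(N:ℤ)) N, T a) - 2 * π / 3 * (y * Real.sqrt y)
            = (∑ a ∈ Finset.Icc (-(N:ℤ)) N, (T a - G a))
              + ((∑ a ∈ Finset.Icc (-(N:ℤ)) N, G a) - 2 * π / 3 * (y * Real.sqrt y)) := by
          rw [← hsum_split]; ring
        rw [key]
        exact abs_add_le _ _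
    _ ≤ 9 * y + 3 * π / 2 * y := add_le_add herr hGsum
    _ ≤ 14 * y := by nlinarith [Real.pi_lt_d2, hy0]
end
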